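/- Let C be a skew α-constacyclic code of length n over R with respect to an automorphism θ_t of order k, where α is a unit fixed by θ_t satisfying α² = 1. If gcd(n,k) = 1, then C is (classically) α-constacyclic: for every (c₀,...,c_{n-1}) ∈ C, also (αc_{n-1}, c₀, ..., c_{n-2}) ∈ C. -/

import Mathlib

/-- The standard form `a + u*b + v*c + u*v*d` of an element of
`R = F_q + uF_q + vF_q + uvF_q`. -/
def stdForm (F R : Type*) [Field F] [CommRing R] [Algebra F R] (u v : R)
    (x : F × F × F × F) : R :=
  algebraMap F R x.1 + u * algebraMap F R x.2.1 + v * algebraMap F R x.2.2.1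
    + u * v * algebraMap F R x.2.2.2

/-- The skew `α`-constacyclic shift `τ_α` with respect to `θ`. -/
def skewConstaShift {R : Type*} [Mul R] [One R] [DecidableEq R] (θ : R → R) (α : R)
    {n : ℕ} [NeZero n] (x : Fin n → R) : Fin n → R :=
  fun i => (if i = 0 then α else 1) * θ (x (i - 1))

lemma stdForm_mul {F R : Type*} [Field F] [CommRing R] [Algebra F R] (u v : R)
    (hu : u * u = u) (hv : v * v = v) (a b c d a' b' c' d' : F) :
    stdForm F R u v (a,b,c,d) * stdForm F R u v (a',b',c',d') =
    stdForm F R u v (a*a', a*b'+b*a'+b*b', a*c'+c*a'+c*c',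
      a*d'+d*a'+b*c'+c*b'+b*d'+d*b'+c*d'+d*c'+d*d') := by
  simp only [stdForm, map_add, map_mul]
  linear_combination (algebraMap F R b * algebraMap F R b'
      + v * (algebraMap F R b * algebraMap F R d' + algebraMap F R d * algebraMap F R b')
      + v^2 * (algebraMap F R d * algebraMap F R d')) * hu
    + (algebraMap F R c * algebraMap F R c'
      + u * (algebraMap F R c * algebraMap F R d' + algebraMap F R d * algebraMap F R c')
      + u * (algebraMap F R d * algebraMap F R d')) * hv

theorem stmt14 (p m t : ℕ) (hp : p.Prime) (hodd : p ≠ 2) (ht : 0 < t) (htm : t ∣ m)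
    (F : Type*) [Field F] [Fintype F] (hF : Fintype.card F = p ^ m)
    (R : Type*) [CommRing R] [DecidableEq R] [Algebra F R] (u v : R)
    (hu : u * u = u) (hv : v * v = v)
    (hbij : Function.Bijective (stdForm F R u v))
    (θ : R → R)
    (hθ : ∀ a b c d : F, θ (stdForm F R u v (a, b, c, d)) =
      stdForm F R u v (a ^ p ^ t, b ^ p ^ t, c ^ p ^ t, d ^ p ^ t))
    -- k is the order of θ
    (k : ℕ) (hk0 : 0 < k) (hkid : θ^[k] = id)
    (hkmin : ∀ j : ℕ, 0 < j → j < k → θ^[j] ≠ id)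
    (α : R) (hα : IsUnit α) (hαfix : θ α = α) (hα2 : α ^ 2 = 1)
    (n : ℕ) [NeZero n] (hgcd : Nat.gcd n k = 1)
    (C : Submodule R (Fin n → R))
    (hC : skewConstaShift θ α '' (C : Set (Fin n → R)) = C) :
    -- C is classically α-constacyclic
    ∀ c ∈ C, (fun i => (if i = 0 then α else 1) * c (i - 1)) ∈ C := by
  haveI : Fact p.Prime := ⟨hp⟩
  -- `F` has characteristic `p`
  have hm : 0 < m := by
    rcases Nat.eq_zero_or_pos m with h | h
    · exfalso; rw [h, pow_zero] at hF
      have := Fintype.one_lt_card (α := F); omega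
    · exact h
  haveI hrF : CharP F (ringChar F) := ringChar.charP F
  have hcharp : ringChar F = p := by
    obtain ⟨n', hn'p, hcard⟩ := FiniteField.card F (ringChar F)
    have hdvd : p ∣ ringChar F ^ (n' : ℕ) := by
      rw [← hcard, hF]; exact dvd_pow_self p hm.ne'
    have := hp.dvd_of_dvd_pow hdvd
    exact ((Nat.prime_dvd_prime_iff_eq hp hn'p).mp this).symm
  haveI : CharP F p := hcharp ▸ hrF
  -- `θ` is multiplicative
  have θmul : ∀ x y : R, θ (x * y) = θ x * θ y := by
    intro x y
    obtain ⟨⟨a, b, c, d⟩, rfl⟩ := hbij.2 x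
    obtain ⟨⟨a', b', c', d'⟩, rfl⟩ := hbij.2 y
    rw [stdForm_mul u v hu hv, hθ, hθ, hθ, stdForm_mul u v hu hv]
    congr 2 <;>
      simp only [← iterateFrobenius_def (p := p) (n := t), map_add, map_mul]
  -- `θ` commutes with multiplication by `α`
  have hθα : ∀ x : R, θ (α * x) = α * θ x := by
    intro x; rw [θmul, hαfix]
  have hθαe : ∀ (e : ℕ) (x : R), θ (α ^ e * x) = α ^ e * θ x := by
    intro e
    induction e with
    | zero => intro x; simp
    | succ e ih =>
        intro x
        have : α ^ (e + 1) * x = α ^ e * (α * x) := by ring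
        rw [this, ih, hθα]
        ring
  have hθiter : ∀ (j e : ℕ) (x : R), θ^[j] (α ^ e * x) = α ^ e * θ^[j] x := by
    intro j
    induction j with
    | zero => intro e x; simp
    | succ j ih =>
        intro e x
        rw [Function.iterate_succ_apply', ih, hθαe, Function.iterate_succ_apply']
  set τ : (Fin n → R) → (Fin n → R) := skewConstaShift θ α with hτ
  have hτC : ∀ c ∈ C, τ c ∈ C := by
    intro c hc
    have : τ c ∈ τ '' (C : Set (Fin n → R)) := Set.mem_image_of_mem τ hc
    rwa [hτ, hC] at this
  have hτiterC : ∀ (j : ℕ) (c : Fin n → R), c ∈ C → τ^[j] c ∈ C := by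
    intro j
    induction j with
    | zero => intro c hc; simpa using hc
    | succ j ih =>
        intro c hc
        rw [Function.iterate_succ_apply']
        exact hτC _ (ih c hc)
  -- value of `(i - 1).val`
  have hsub1 : ∀ i : Fin n, (i - 1).val = if i = 0 then n - 1 else i.val - 1 := by
    intro i
    rcases n with _ | n'
    · exact absurd rfl (NeZero.ne 0)
    · simpa using Fin.coe_sub_one i
  -- formula for iterates up to n
  open Fin.NatCast in
  have key : ∀ j : ℕ, j ≤ n → ∀ c : Fin n → R,
      τ^[j] c = fun i => (if i.val < j then α else 1) * θ^[j] (c (i - (j : Fin n))) := by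
    intro j
    induction j with
    | zero => intro _ c; funext i; simp
    | succ j ih =>
        intro hj c
        funext i
        rw [Function.iterate_succ_apply', ih (Nat.le_of_succ_le hj)]
        show (if i = 0 then α else 1) *
            θ ((if (i - 1).val < j then α else 1) * θ^[j] (c (i - 1 - (j : Fin n)))) = _
        have hidx : i - 1 - (j : Fin n) = i - ((j + 1 : ℕ) : Fin n) := by
          push_cast
          rw [sub_sub, add_comm]
        rw [hidx]
        by_cases hi : i = 0
        · have h1 : ¬ ((i - 1).val < j) := by
            rw [hsub1 i, if_pos hi]
            omega
          rw [if_neg h1, if_pos hi, one_mul, if_pos]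
          · rw [← Function.iterate_succ_apply' θ]
          · rw [hi]; simp
        · have hival : 0 < i.val := by
            rcases Nat.eq_zero_or_pos i.val with h | h
            · exact absurd (Fin.ext h) hi
            · exact h
          have h1 : (i - 1).val < j ↔ i.val < j + 1 := by
            rw [hsub1 i, if_neg hi]
            omega
          rw [if_neg hi, one_mul]
          by_cases h2 : (i - 1).val < j
          · rw [if_pos h2, if_pos (h1.mp h2)]
            have := hθαe 1 (θ^[j] (c (i - ((j + 1 : ℕ) : Fin n))))
            simpa [pow_one, Function.iterate_succ_apply'] using this
          · rw [if_neg h2, if_neg (fun h => h2 (h1.mpr h)), one_mul, one_mul,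
              ← Function.iterate_succ_apply' θ]
  -- iterate n times: pure `α`-multiplication plus `θ^[n]`
  have keyn : ∀ c : Fin n → R, τ^[n] c = fun i => α * θ^[n] (c i) := by
    intro c
    rw [key n le_rfl c]
    funext i
    rw [if_pos i.isLt, Fin.natCast_self, sub_zero]
  have keyqn : ∀ (q : ℕ) (c : Fin n → R),
      τ^[q * n] c = fun i => α ^ q * θ^[q * n] (c i) := by
    intro q
    induction q with
    | zero => intro c; funext i; simp
    | succ q ih =>
        intro c
        have hqn : (q + 1) * n = n + q * n := by ring
        funext i
        rw [hqn, Function.iterate_add_apply, keyn, ih]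
        show α * θ^[n] (α ^ q * θ^[q * n] (c i)) = _
        rw [hθiter n q, ← Function.iterate_add_apply θ n (q * n) (c i), ← hqn, pow_succ]
        ring
  -- choose q with k ∣ q*n + 1
  haveI : NeZero k := ⟨hk0.ne'⟩
  have hco : Nat.Coprime n k := hgcd
  have hunit : IsUnit ((n : ZMod k)) := (ZMod.isUnit_iff_coprime n k).mpr hco
  set q : ℕ := (-(n : ZMod k)⁻¹).val with hq
  have hdvd : k ∣ q * n + 1 := by
    rw [← ZMod.natCast_eq_zero_iff]
    push_cast
    rw [hq, ZMod.natCast_zmod_val]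
    have hinv : (n : ZMod k)⁻¹ * (n : ZMod k) = 1 := ZMod.inv_mul_of_unit _ hunit
    rw [neg_mul, hinv]
    ring
  obtain ⟨s, hs⟩ := hdvd
  have hθJ : θ^[q * n + 1] = id := by
    rw [hs, Function.iterate_mul, hkid, Function.iterate_id]
  intro c hc
  have hmem : τ^[q * n + 1] c ∈ C := hτiterC _ c hc
  have hform : τ^[q * n + 1] c = fun i => (if i = 0 then α else 1) * (α ^ q * c (i - 1)) := by
    funext i
    rw [show q * n + 1 = 1 + q * n by ring, Function.iterate_add_apply,
      Function.iterate_one, keyqn]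
    show (if i = 0 then α else 1) * θ (α ^ q * θ^[q * n] (c (i - 1))) = _
    rw [hθαe, ← Function.iterate_succ_apply' θ, hθJ]
    rfl
  have hαq : α ^ q * α ^ q = 1 := by
    rw [← pow_add, ← two_mul, pow_mul, hα2, one_pow]
  have hfinal : (fun i => (if i = 0 then α else 1) * c (i - 1)) = α ^ q • τ^[q * n + 1] c := by
    funext i
    rw [hform]
    show (if i = 0 then α else 1) * c (i - 1)
        = α ^ q * ((if i = 0 then α else 1) * (α ^ q * c (i - 1)))
    calc (if i = 0 then α else 1) * c (i - 1)
        = (α ^ q * α ^ q) * ((if i = 0 then α else 1) * c (i - 1)) := by rw [hαq, one_mul]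
      _ = α ^ q * ((if i = 0 then α else 1) * (α ^ q * c (i - 1))) := by ring
  rw [hfinal]
  exact Submodule.smul_mem C _ hmem
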